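/- Let G be a factorizable finite simple graph, M a perfect matching of G, and e = xy an edge of G not belonging to M. Then the following are equivalent: (i) e is allowed in G, i.e., e lies in some perfect matching of G; (ii) there is an M-alternating cycle containing e; (iii) there is an M-saturated path between x and y. -/

import Mathlib

open SimpleGraph

variable {V : Type*}

/-- A set of edges is pairwise vertex-disjoint. -/
def DisjointEdges (N : Set (Sym2 V)) : Prop :=
  ∀ e ∈ N, ∀ f ∈ N, e ≠ f → ∀ x : V, x ∈ e → x ∉ f

/-- `M` is a matching of `G`: a set of pairwise vertex-disjoint edges of `G`. -/
def IsMatchingSet (G : SimpleGraph V) (M : Set (Sym2 V)) : Prop :=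
  M ⊆ G.edgeSet ∧ DisjointEdges M

/-- `M` is a perfect matching of `G`: a matching covering every vertex. -/
def IsPerfectMatchingSet (G : SimpleGraph V) (M : Set (Sym2 V)) : Prop :=
  IsMatchingSet G M ∧ ∀ v : V, ∃ e ∈ M, v ∈ e

/-- `M` is a near-perfect matching of `G` whose unique exposed vertex is `v`. -/
def IsNearPerfectMatchingSet (G : SimpleGraph V) (M : Set (Sym2 V)) (v : V) : Prop :=
  IsMatchingSet G M ∧ (∀ e ∈ M, v ∉ e) ∧ ∀ u : V, u ≠ v → ∃ e ∈ M, u ∈ e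

/-- The induced subgraph `G[X]` has a perfect matching. -/
def HasPMOn (G : SimpleGraph V) (X : Set V) : Prop :=
  ∃ M : Set (Sym2 V), IsMatchingSet G M ∧ (∀ e ∈ M, ∀ x : V, x ∈ e → x ∈ X) ∧
    ∀ v ∈ X, ∃ e ∈ M, v ∈ e

/-- `G` is factorizable: it has a perfect matching. -/
def Factorizable (G : SimpleGraph V) : Prop :=
  ∃ M : Set (Sym2 V), IsPerfectMatchingSet G M

/-- `G` is factor-critical: deleting any single vertex leaves a factorizable graph. -/
def FactorCritical (G : SimpleGraph V) : Prop :=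
  ∀ v : V, HasPMOn G {v}ᶜ

/-- A walk is `M`-alternating: its edges outside `M` are pairwise vertex-disjoint. -/
def MAlternating (M : Set (Sym2 V)) {G : SimpleGraph V} {u v : V} (p : G.Walk u v) : Prop :=
  ∀ e ∈ p.edges, ∀ f ∈ p.edges, e ∉ M → f ∉ M → e ≠ f → ∀ x : V, x ∈ e → x ∉ f

/-- An `M`-saturated path: a path with an odd number of edges such that `M ∩ E(P)`
is a perfect matching of `P`. -/
def IsSaturatedPath (M : Set (Sym2 V)) {G : SimpleGraph V} {u v : V} (p : G.Walk u v) : Prop :=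
  p.IsPath ∧ Odd p.length ∧ ∀ x ∈ p.support, ∃ e ∈ p.edges, e ∈ M ∧ x ∈ e

/-- An `M`-exposed path: a path with an odd number of edges such that `E(P) \ M`
is a perfect matching of `P`. -/
def IsExposedPath (M : Set (Sym2 V)) {G : SimpleGraph V} {u v : V} (p : G.Walk u v) : Prop :=
  p.IsPath ∧ Odd p.length ∧ ∀ x ∈ p.support, ∃ e ∈ p.edges, e ∉ M ∧ x ∈ e

/-- An `M`-balanced path from `u` to `v`: an `M`-alternating path with an even number
of edges whose first edge (the one incident with `u`) belongs to `M`; a trivial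
one-vertex path is `M`-balanced. -/
def IsBalancedPath (M : Set (Sym2 V)) {G : SimpleGraph V} {u v : V} (p : G.Walk u v) : Prop :=
  p.IsPath ∧ Even p.length ∧ MAlternating M p ∧ ∀ e ∈ p.edges.head?, e ∈ M

/-- An edge of `G` is allowed if it lies in some perfect matching of `G`. -/
def Allowed (G : SimpleGraph V) (e : Sym2 V) : Prop :=
  ∃ M : Set (Sym2 V), IsPerfectMatchingSet G M ∧ e ∈ M

/-- The spanning subgraph of `G` formed by its allowed edges. -/
def allowedSubgraph (G : SimpleGraph V) : SimpleGraph V where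
  Adj u v := G.Adj u v ∧ Allowed G s(u, v)
  symm := by
    refine ⟨?_⟩
    intro u v h
    refine ⟨h.1.symm, ?_⟩
    rw [Sym2.eq_swap]
    exact h.2
  loopless := ⟨fun v h => G.loopless.irrefl v h.1⟩

/-- `C` is (the vertex set of) a factor-component of `G`: a connected component of the
spanning subgraph of `G` formed by the allowed edges (the factor-component itself being
the induced subgraph `G[C]`). -/
def IsFactorComponent (G : SimpleGraph V) (C : Set V) : Prop :=
  ∃ c : (allowedSubgraph G).ConnectedComponent, C = c.supp

/-- `G` is elementary: it is factorizable and has exactly one factor-component. -/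
def Elementary (G : SimpleGraph V) : Prop :=
  Factorizable G ∧ (allowedSubgraph G).Connected

/-- `X` is a separating set of `G`. -/
def Separating (G : SimpleGraph V) (X : Set V) : Prop :=
  ∀ C : Set V, IsFactorComponent G C → C ⊆ X ∨ Disjoint C X

/-- The contraction `G[X]/S`: the induced subgraph of `G` on `X` with `S` contracted
to a single vertex (the vertex `none`), deleting loops and parallel edges. -/
def contractOn (G : SimpleGraph V) (X S : Set V) : SimpleGraph (Option ↥(X \ S)) where
  Adj a b :=
    match a, b with
    | some x, some y => G.Adj x.1 y.1
    | some x, none => ∃ s ∈ S, G.Adj x.1 s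
    | none, some y => ∃ s ∈ S, G.Adj y.1 s
    | none, none => False
  symm := by
    refine ⟨?_⟩
    rintro (_ | x) (_ | y) h
    · exact h.elim
    · exact h
    · exact h
    · exact h.symm
  loopless := by
    refine ⟨?_⟩
    rintro (_ | x) h
    · exact h.elim
    · exact G.loopless.irrefl x.1 h

/-- `X` is a critical-inducing set for the factor-component (with vertex set) `C1`:
a separating set containing `C1` such that `G[X]/C1` is factor-critical. -/
def CriticalInducing (G : SimpleGraph V) (C1 X : Set V) : Prop :=
  Separating G X ∧ C1 ⊆ X ∧ FactorCritical (contractOn G X C1)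

/-- `C1 ⊵ C2`: there is a critical-inducing set for `C1` to `C2`. -/
def Yield (G : SimpleGraph V) (C1 C2 : Set V) : Prop :=
  ∃ X : Set V, CriticalInducing G C1 X ∧ C2 ⊆ X

/-- `u ∼ v`: `u = v` or `G - u - v` has no perfect matching. -/
def SimRel (G : SimpleGraph V) (u v : V) : Prop :=
  u = v ∨ ¬ HasPMOn G (({u, v} : Set V)ᶜ)

/-- An `M`-ear relative to the vertex set `X`: a path whose two end vertices lie in `X`
and whose internal vertices do not (or a cycle with exactly one vertex in `X`), such
that the ear minus `X` is an `M`-saturated path. -/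
def IsMEar (G : SimpleGraph V) (M : Set (Sym2 V)) (X : Set V) {u v : V}
    (p : G.Walk u v) : Prop :=
  u ∈ X ∧ v ∈ X ∧ ((∃ h : u = v, (p.copy rfl h.symm).IsCycle) ∨ (u ≠ v ∧ p.IsPath)) ∧
  ∃ (x y : V) (hux : G.Adj u x) (q : G.Walk x y) (hyv : G.Adj y v),
    p = SimpleGraph.Walk.cons hux (q.concat hyv) ∧
    IsSaturatedPath M q ∧ ∀ w ∈ q.support, w ∉ X

/-- An `M`-ear relative to `X` through (the factor-component with vertex set) `C`:
some internal vertex of the ear lies in `C`. -/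
def IsMEarThrough (G : SimpleGraph V) (M : Set (Sym2 V)) (X C : Set V) {u v : V}
    (p : G.Walk u v) : Prop :=
  IsMEar G M X p ∧ ∃ w ∈ p.support, w ∉ X ∧ w ∈ C

/-- An `M`-ear sequence `(H 0, …, H k)` of pairwise distinct factor-components,
where for each `i` there is an `M`-ear relative to `H i` through `H (i+1)`. -/
def IsMEarSequence (G : SimpleGraph V) (M : Set (Sym2 V)) (k : ℕ)
    (H : Fin (k + 1) → Set V) : Prop :=
  (∀ i, IsFactorComponent G (H i)) ∧ Function.Injective H ∧
  ∀ i : Fin k, ∃ (u v : V) (p : G.Walk u v),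
    IsMEarThrough G M (H i.castSucc) (H i.succ) p


section Statement3Aux

variable {G : SimpleGraph V}

lemma partner_unique {M : Set (Sym2 V)} (hM : IsMatchingSet G M) {v a b : V}
    (ha : s(v, a) ∈ M) (hb : s(v, b) ∈ M) : a = b := by
  by_contra hne
  have hbv : G.Adj v b := G.mem_edgeSet.mp (hM.1 hb)
  have hef : s(v, a) ≠ s(v, b) := by
    intro h
    rw [Sym2.eq_iff] at h
    rcases h with ⟨-, h⟩ | ⟨h1, h2⟩
    · exact hne h
    · exact hbv.ne h1
  exact hM.2 _ ha _ hb hef v (Sym2.mem_mk_left _ _) (Sym2.mem_mk_left _ _)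

lemma endpoint_edge_unique : ∀ {u w : V} {p : G.Walk u w}, p.IsPath → ∀ {e f : Sym2 V},
    e ∈ p.edges → f ∈ p.edges → u ∈ e → u ∈ f → e = f := by
  intro u w p
  induction p with
  | nil => intro _ e f he; simp at he
  | @cons u c w h q ih =>
    intro hp e f he hf hue huf
    rw [SimpleGraph.Walk.cons_isPath_iff] at hp
    have key : ∀ g : Sym2 V, g ∈ (SimpleGraph.Walk.cons h q).edges → u ∈ g → g = s(u, c) := by
      intro g hg hug
      rw [SimpleGraph.Walk.edges_cons, List.mem_cons] at hg
      rcases hg with rfl | hg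
      · rfl
      · obtain ⟨z, rfl⟩ := Sym2.mem_iff_exists.mp hug
        exact (hp.2 (q.fst_mem_support_of_mem_edges hg)).elim
    rw [key e he hue, key f hf huf]

lemma mem_support_of_mem_edges' {u w : V} {p : G.Walk u w} {e : Sym2 V} {v : V}
    (he : e ∈ p.edges) (hv : v ∈ e) : v ∈ p.support := by
  obtain ⟨z, rfl⟩ := Sym2.mem_iff_exists.mp hv
  exact p.fst_mem_support_of_mem_edges he

lemma path_not_three_edges : ∀ {u w : V} {p : G.Walk u w}, p.IsPath →
    ∀ {e f g : Sym2 V}, e ∈ p.edges → f ∈ p.edges → g ∈ p.edges →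
    e ≠ f → e ≠ g → f ≠ g → ∀ v : V, v ∈ e → v ∈ f → v ∈ g → False := by
  intro u w p
  induction p with
  | nil => intro _ e f g he; simp at he
  | @cons u c w h q ih =>
    intro hp e f g he hf hg hef heg hfg v hve hvf hvg
    rw [SimpleGraph.Walk.cons_isPath_iff] at hp
    have helper : v ∈ s(u, c) → ∀ e' f' : Sym2 V, e' ∈ q.edges → f' ∈ q.edges → e' ≠ f' →
        v ∈ e' → v ∈ f' → False := by
      intro hva e' f' he' hf' hne hv1 hv2
      rcases Sym2.mem_iff.mp hva with rfl | rfl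
      · obtain ⟨z, rfl⟩ := Sym2.mem_iff_exists.mp hv1
        exact hp.2 (q.fst_mem_support_of_mem_edges he')
      · exact hne (endpoint_edge_unique hp.1 he' hf' hv1 hv2)
    rw [SimpleGraph.Walk.edges_cons, List.mem_cons] at he hf hg
    rcases he with rfl | he
    · rcases hf with rfl | hf
      · exact hef rfl
      · rcases hg with rfl | hg
        · exact heg rfl
        · exact helper hve f g hf hg hfg hvf hvg
    · rcases hf with rfl | hf
      · rcases hg with rfl | hg
        · exact hfg rfl
        · exact helper hvf e g he hg heg hve hvg
      · rcases hg with rfl | hg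
        · exact helper hvg e f he hf hef hve hvf
        · exact ih hp.1 he hf hg hef heg hfg v hve hvf hvg

lemma cycle_two_edges_base {v : V} {q : G.Walk v v} (hc : q.IsCycle) :
    ∃ e ∈ q.edges, ∃ f ∈ q.edges, e ≠ f ∧ v ∈ e ∧ v ∈ f := by
  cases q with
  | nil => simpa using hc.three_le_length
  | @cons _ c _ h r =>
    have hlen : 3 ≤ r.length + 1 := by simpa using hc.three_le_length
    have hnil : ¬ r.reverse.Nil := by
      rw [SimpleGraph.Walk.nil_iff_length_eq, SimpleGraph.Walk.length_reverse]
      omega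
    obtain ⟨z, hadj, r', hr'⟩ := SimpleGraph.Walk.not_nil_iff.mp hnil
    have hb : s(v, z) ∈ r.edges := by
      have hbz : s(v, z) ∈ r.reverse.edges := by rw [hr']; simp
      rwa [SimpleGraph.Walk.edges_reverse, List.mem_reverse] at hbz
    have hane : s(v, c) ∉ r.edges := by
      have hnd := hc.isCircuit.isTrail.edges_nodup
      rw [SimpleGraph.Walk.edges_cons] at hnd
      exact (List.nodup_cons.mp hnd).1
    exact ⟨s(v, c), by simp, s(v, z), by simp [hb], fun hh => hane (hh ▸ hb),
      Sym2.mem_mk_left _ _, Sym2.mem_mk_left _ _⟩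

lemma cycle_two_edges {w : V} {p : G.Walk w w} (hc : p.IsCycle) {v : V}
    (hv : v ∈ p.support) : ∃ e ∈ p.edges, ∃ f ∈ p.edges, e ≠ f ∧ v ∈ e ∧ v ∈ f := by
  classical
  obtain ⟨e, he, f, hf, h1, h2, h3⟩ := cycle_two_edges_base (hc.rotate hv)
  have hrot := p.rotate_edges v hv
  exact ⟨e, hrot.mem_iff.mp he, f, hrot.mem_iff.mp hf, h1, h2, h3⟩

lemma cycle_to_allowed {M : Set (Sym2 V)} (hM : IsPerfectMatchingSet G M) {x y : V}
    (heM : s(x, y) ∉ M) {w : V} {p : G.Walk w w} (hc : p.IsCycle)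
    (halt : MAlternating M p) (hmem : s(x, y) ∈ p.edges) : Allowed G s(x, y) := by
  classical
  have pick : ∀ {v : V} {e : Sym2 V}, e ∈ p.edges → v ∈ e → ∃ g ∈ p.edges, g ≠ e ∧ v ∈ g := by
    intro v e heE hve
    obtain ⟨a, ha, b, hb, hab, hva, hvb⟩ := cycle_two_edges hc (mem_support_of_mem_edges' heE hve)
    by_cases hax : a = e
    · exact ⟨b, hb, fun hh => hab (hax.trans hh.symm), hvb⟩
    · exact ⟨a, ha, hax, hva⟩
  refine ⟨(M \ {e | e ∈ p.edges}) ∪ ({e | e ∈ p.edges} \ M), ⟨⟨?_, ?_⟩, ?_⟩, ?_⟩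
  · rintro e (⟨he, -⟩ | ⟨he, -⟩)
    · exact hM.1.1 he
    · exact p.edges_subset_edgeSet he
  · rintro e he f hf hef v hve hvf
    rcases he with ⟨heM', heE⟩ | ⟨heE, heM'⟩ <;> rcases hf with ⟨hfM', hfE⟩ | ⟨hfE, hfM'⟩
    · exact hM.1.2 e heM' f hfM' hef v hve hvf
    · obtain ⟨g, hg, hgf, hvg⟩ := pick hfE hvf
      by_cases hgM : g ∈ M
      · exact hM.1.2 g hgM e heM' (fun hh => heE (hh ▸ hg)) v hvg hve
      · exact halt f hfE g hg hfM' hgM (fun hh => hgf hh.symm) v hvf hvg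
    · obtain ⟨g, hg, hge, hvg⟩ := pick heE hve
      by_cases hgM : g ∈ M
      · exact hM.1.2 g hgM f hfM' (fun hh => hfE (hh ▸ hg)) v hvg hvf
      · exact halt e heE g hg heM' hgM (fun hh => hge hh.symm) v hve hvg
    · exact halt e heE f hfE heM' hfM' hef v hve hvf
  · intro v
    obtain ⟨e, heMm, hve⟩ := hM.2 v
    by_cases heE : e ∈ p.edges
    · obtain ⟨g, hg, hge, hvg⟩ := pick heE hve
      have hgM : g ∉ M := fun hgM => hM.1.2 g hgM e heMm hge v hvg hve
      exact ⟨g, Or.inr ⟨hg, hgM⟩, hvg⟩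
    · exact ⟨e, Or.inl ⟨heMm, heE⟩, hve⟩
  · exact Or.inr ⟨hmem, heM⟩

lemma satpath_to_cycle {M : Set (Sym2 V)} {x y : V}
    (he : G.Adj x y) (heM : s(x, y) ∉ M) {p : G.Walk x y} (hp : IsSaturatedPath M p) :
    ∃ (w : V) (c : G.Walk w w), c.IsCycle ∧ MAlternating M c ∧ s(x, y) ∈ c.edges := by
  obtain ⟨hpath, hodd, hsat⟩ := hp
  have hxM : ∀ f ∈ p.edges, x ∈ f → f ∈ M := by
    intro f hf hxf
    obtain ⟨g, hg, hgM, hxg⟩ := hsat x p.start_mem_support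
    have hgf : g = f := endpoint_edge_unique hpath hg hf hxg hxf
    exact hgf ▸ hgM
  have hyM : ∀ f ∈ p.edges, y ∈ f → f ∈ M := by
    intro f hf hyf
    obtain ⟨g, hg, hgM, hyg⟩ := hsat y p.end_mem_support
    have hf' : f ∈ p.reverse.edges := by
      rw [SimpleGraph.Walk.edges_reverse, List.mem_reverse]; exact hf
    have hg' : g ∈ p.reverse.edges := by
      rw [SimpleGraph.Walk.edges_reverse, List.mem_reverse]; exact hg
    have hgf : g = f := endpoint_edge_unique hpath.reverse hg' hf' hyg hyf
    exact hgf ▸ hgM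
  have hyx : s(y, x) ∉ p.edges := by
    intro hmem
    have hin : s(y, x) ∈ M := hxM _ hmem (Sym2.mem_mk_right _ _)
    rw [Sym2.eq_swap] at hin
    exact heM hin
  refine ⟨y, SimpleGraph.Walk.cons he.symm p, ?_, ?_, ?_⟩
  · exact (SimpleGraph.Walk.cons_isCycle_iff p he.symm).mpr ⟨hpath, hyx⟩
  · intro e he' f hf' heM' hfM' hef v hve hvf
    rw [SimpleGraph.Walk.edges_cons, List.mem_cons] at he' hf'
    have hkey : ∀ g ∈ p.edges, g ∉ M → v ∈ s(y, x) → v ∈ g → False := by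
      intro g hg hgM hvyx hvg
      rcases Sym2.mem_iff.mp hvyx with rfl | rfl
      · exact hgM (hyM g hg hvg)
      · exact hgM (hxM g hg hvg)
    rcases he' with rfl | he'
    · rcases hf' with rfl | hf'
      · exact hef rfl
      · exact hkey f hf' hfM' hve hvf
    · rcases hf' with rfl | hf'
      · exact hkey e he' heM' hvf hve
      · obtain ⟨g, hg, hgM, hvg⟩ := hsat v (mem_support_of_mem_edges' he' hve)
        exact path_not_three_edges hpath he' hf' hg hef
          (fun hh => heM' (show e ∈ M by rw [hh]; exact hgM))
          (fun hh => hfM' (show f ∈ M by rw [hh]; exact hgM)) v hve hvf hvg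
  · rw [SimpleGraph.Walk.edges_cons]
    exact List.mem_cons.mpr (Or.inl Sym2.eq_swap)

lemma allowed_to_satpath [Fintype V] {M N : Set (Sym2 V)}
    (hM : IsPerfectMatchingSet G M) (hN : IsPerfectMatchingSet G N) {x y : V}
    (hxy : s(x, y) ∈ N) (hne : x ≠ y) :
    ∃ p : G.Walk x y, IsSaturatedPath M p := by
  classical
  have hmex : ∀ v : V, ∃ w, s(v, w) ∈ M := by
    intro v
    obtain ⟨e, he, hv⟩ := hM.2 v
    obtain ⟨w, rfl⟩ := Sym2.mem_iff_exists.mp hv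
    exact ⟨w, he⟩
  have hnex : ∀ v : V, ∃ w, s(v, w) ∈ N := by
    intro v
    obtain ⟨e, he, hv⟩ := hN.2 v
    obtain ⟨w, rfl⟩ := Sym2.mem_iff_exists.mp hv
    exact ⟨w, he⟩
  set m : V → V := fun v => (hmex v).choose with hm_def
  set n : V → V := fun v => (hnex v).choose with hn_def
  have hmM : ∀ v, s(v, m v) ∈ M := fun v => (hmex v).choose_spec
  have hnN : ∀ v, s(v, n v) ∈ N := fun v => (hnex v).choose_spec
  have hadjM : ∀ v, G.Adj v (m v) := fun v => G.mem_edgeSet.mp (hM.1.1 (hmM v))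
  have hadjN : ∀ v, G.Adj v (n v) := fun v => G.mem_edgeSet.mp (hN.1.1 (hnN v))
  have hmu : ∀ v w, s(v, w) ∈ M → w = m v := fun v w h => partner_unique hM.1 h (hmM v)
  have hnu : ∀ v w, s(v, w) ∈ N → w = n v := fun v w h => partner_unique hN.1 h (hnN v)
  have hminv : ∀ v, m (m v) = v := by
    intro v
    have hsw : s(m v, v) ∈ M := by rw [Sym2.eq_swap]; exact hmM v
    exact (hmu (m v) v hsw).symm
  have hninv : ∀ v, n (n v) = v := by
    intro v
    have hsw : s(n v, v) ∈ N := by rw [Sym2.eq_swap]; exact hnN v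
    exact (hnu (n v) v hsw).symm
  have hnx : n x = y := (hnu x y hxy).symm
  have hny : n y = x := by
    have hsw : s(y, x) ∈ N := by rw [Sym2.eq_swap]; exact hxy
    exact (hnu y x hsw).symm
  have key : ∀ (k : ℕ) (T : Finset V) (u : V), (Finset.univ \ T).card ≤ k →
      u ∉ T → u ≠ y → y ∉ T → (x ∈ T ∨ x = u) → (n u ∈ T ∨ n u = y) → m u ∉ T →
      (∀ v ∈ T, m v ∈ T ∨ m v = u) → (∀ v ∈ T, n v ∈ T ∨ n v = y ∨ n v = u) →
      ∃ p : G.Walk u y, p.IsPath ∧ Odd p.length ∧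
        (∀ v ∈ p.support, ∃ e ∈ p.edges, e ∈ M ∧ v ∈ e) ∧ (∀ v ∈ p.support, v ∉ T) := by
    intro k
    induction k with
    | zero =>
      intro T u hcard h1 _ _ _ _ _ _ _
      exfalso
      have hmem : u ∈ Finset.univ \ T := by simp [h1]
      have hpos := Finset.card_pos.mpr ⟨u, hmem⟩
      omega
    | succ k ih =>
      intro T u hcard h1 h2 h3 h4 h5 h6 h7 h8
      have hadj1 : G.Adj u (m u) := hadjM u
      by_cases hay : m u = y
      · refine ⟨SimpleGraph.Walk.cons (hay ▸ hadj1) SimpleGraph.Walk.nil, ?_, ?_, ?_, ?_⟩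
        · simp [SimpleGraph.Walk.cons_isPath_iff, h2]
        · exact ⟨0, by simp⟩
        · intro v hv
          refine ⟨s(u, y), by simp, by rw [← hay]; exact hmM u, ?_⟩
          have hv' : v = u ∨ v = y := by simpa using hv
          rcases hv' with rfl | rfl
          · exact Sym2.mem_mk_left _ _
          · exact Sym2.mem_mk_right _ _
        · intro v hv
          have hv' : v = u ∨ v = y := by simpa using hv
          rcases hv' with rfl | rfl
          · exact h1
          · exact h3
      · -- recursive case
        have hau : m u ≠ u := (hadjM u).ne'
        have haT : m u ∉ T := h6
        have hadj2 : G.Adj (m u) (n (m u)) := hadjN (m u)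
        have hba : n (m u) ≠ m u := (hadjN (m u)).ne'
        have hbu : n (m u) ≠ u := by
          intro hh
          have hnu' : m u = n u := by rw [← hninv (m u), hh]
          rcases h5 with h | h
          · exact haT (hnu' ▸ h)
          · exact hay (hnu'.trans h)
        have hbT : n (m u) ∉ T := by
          intro hh
          have hnb : n (n (m u)) = m u := hninv (m u)
          rcases h8 _ hh with h | h | h
          · exact haT (hnb ▸ h)
          · exact hay (hnb ▸ h)
          · exact hau (hnb ▸ h)
        have hby : n (m u) ≠ y := by
          intro hh
          have hax : m u = x := by rw [← hninv (m u), hh, hny]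
          rcases h4 with h | h
          · exact haT (hax ▸ h)
          · exact hau (hax.trans h)
        have hmbT : m (n (m u)) ∉ T := by
          intro hh
          have hmb : m (m (n (m u))) = n (m u) := hminv _
          rcases h7 _ hh with h | h
          · exact hbT (hmb ▸ h)
          · exact hbu (hmb ▸ h)
        have hmbu : m (n (m u)) ≠ u := by
          intro hh
          have : n (m u) = m u := by rw [← hminv (n (m u)), hh]
          exact hba this
        have hmba : m (n (m u)) ≠ m u := by
          intro hh
          have : n (m u) = u := by rw [← hminv (n (m u)), hh, hminv]
          exact hbu this
        set T' : Finset V := insert (m u) (insert u T) with hT'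
        have hcard' : (Finset.univ \ T').card ≤ k := by
          have hsub : Finset.univ \ T' ⊆ Finset.univ \ T := by
            intro v hv
            simp only [hT', Finset.mem_sdiff, Finset.mem_insert, Finset.mem_univ, true_and,
              not_or] at hv ⊢
            exact hv.2.2
          have humem : u ∈ Finset.univ \ T := by simp [h1]
          have hunot : u ∉ Finset.univ \ T' := by simp [hT']
          have hlt := Finset.card_lt_card
            ((Finset.ssubset_iff_of_subset hsub).mpr ⟨u, humem, hunot⟩)
          omega
        obtain ⟨p', hp1, hp2, hp3, hp4⟩ := ih T' (n (m u)) hcard'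
          (by simp [hT', hba, hbu, hbT])
          hby
          (by simp [hT', Ne.symm hay, Ne.symm h2, h3])
          (by rcases h4 with h | h
              · exact Or.inl (by simp [hT', h])
              · exact Or.inl (by simp [hT', h]))
          (Or.inl (by simp [hT', hninv]))
          (by simp [hT', hmbT, hmbu, hmba])
          (by intro v hv
              rw [hT', Finset.mem_insert, Finset.mem_insert] at hv
              rcases hv with h | h | hv
              · exact Or.inl (by rw [h, hminv]; simp [hT'])
              · exact Or.inl (by rw [h]; simp [hT'])
              · rcases h7 v hv with h | h
                · exact Or.inl (by simp [hT', h])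
                · exact Or.inl (by simp [hT', h]))
          (by intro v hv
              rw [hT', Finset.mem_insert, Finset.mem_insert] at hv
              rcases hv with h | h | hv
              · exact Or.inr (Or.inr (by rw [h]))
              · rcases h5 with h' | h'
                · exact Or.inl (by rw [h]; simp [hT', h'])
                · exact Or.inr (Or.inl (by rw [h]; exact h'))
              · rcases h8 v hv with h | h | h
                · exact Or.inl (by simp [hT', h])
                · exact Or.inr (Or.inl h)
                · exact Or.inl (by simp [hT', h]))
        have haT' : m u ∈ T' := by simp [hT']
        have huT' : u ∈ T' := by simp [hT']
        refine ⟨SimpleGraph.Walk.cons hadj1 (SimpleGraph.Walk.cons hadj2 p'), ?_, ?_, ?_, ?_⟩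
        · rw [SimpleGraph.Walk.cons_isPath_iff, SimpleGraph.Walk.cons_isPath_iff]
          refine ⟨⟨hp1, fun hh => hp4 _ hh haT'⟩, ?_⟩
          rw [SimpleGraph.Walk.support_cons]
          intro hh
          rcases List.mem_cons.mp hh with h | hh
          · exact hau h.symm
          · exact hp4 _ hh huT'
        · obtain ⟨t, ht⟩ := hp2
          exact ⟨t + 1, by simp only [SimpleGraph.Walk.length_cons]; omega⟩
        · intro v hv
          rw [SimpleGraph.Walk.support_cons, SimpleGraph.Walk.support_cons] at hv
          rcases List.mem_cons.mp hv with h | hv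
          · exact ⟨s(u, m u), by simp, hmM u, by rw [h]; exact Sym2.mem_mk_left _ _⟩
          rcases List.mem_cons.mp hv with h | hv
          · exact ⟨s(u, m u), by simp, hmM u, by rw [h]; exact Sym2.mem_mk_right _ _⟩
          · obtain ⟨e, hee, heM, hve⟩ := hp3 v hv
            exact ⟨e, by simp [hee], heM, hve⟩
        · intro v hv
          rw [SimpleGraph.Walk.support_cons, SimpleGraph.Walk.support_cons] at hv
          rcases List.mem_cons.mp hv with h | hv
          · rw [h]; exact h1
          rcases List.mem_cons.mp hv with h | hv
          · rw [h]; exact haT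
          · intro hh
            exact hp4 v hv (by simp [hT', hh])
  obtain ⟨p, hh1, hh2, hh3, -⟩ := key (Finset.univ \ (∅ : Finset V)).card ∅ x le_rfl
    (by simp) hne (by simp) (Or.inr rfl) (Or.inr hnx) (by simp) (by simp) (by simp)
  exact ⟨p, hh1, hh2, hh3⟩

end Statement3Aux

/-- Let `G` be a factorizable finite simple graph, `M` a perfect matching
of `G`, and `e = xy` an edge of `G` not in `M`. TFAE: (i) `e` is allowed; (ii) there is an
`M`-alternating cycle containing `e`; (iii) there is an `M`-saturated path between `x`
and `y`. -/
theorem statement_3 {V : Type*} [Fintype V] (G : SimpleGraph V) (hG : Factorizable G)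
    (M : Set (Sym2 V)) (hM : IsPerfectMatchingSet G M)
    (x y : V) (he : G.Adj x y) (heM : s(x, y) ∉ M) :
    (Allowed G s(x, y) ↔
      ∃ (w : V) (p : G.Walk w w), p.IsCycle ∧ MAlternating M p ∧ s(x, y) ∈ p.edges) ∧
    (Allowed G s(x, y) ↔ ∃ p : G.Walk x y, IsSaturatedPath M p) := by
  constructor
  · constructor
    · intro hall
      obtain ⟨N, hN, hxyN⟩ := hall
      obtain ⟨p, hp⟩ := allowed_to_satpath hM hN hxyN he.ne
      exact satpath_to_cycle he heM hp
    · rintro ⟨w, p, hc, halt, hmem⟩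
      exact cycle_to_allowed hM heM hc halt hmem
  · constructor
    · intro hall
      obtain ⟨N, hN, hxyN⟩ := hall
      exact allowed_to_satpath hM hN hxyN he.ne
    · rintro ⟨p, hp⟩
      obtain ⟨w, c, hc, halt, hmem⟩ := satpath_to_cycle he heM hp
      exact cycle_to_allowed hM heM hc halt hmem
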